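/- Let α, β > 0, x₁, x₂ ∈ ℝ, y₁ = x + x₁, y₂ = x + x₂, and suppose x₁ ≠ x₂ + (π/α)(k + 1/2) for all k ∈ ℤ. Define the complex-valued soliton Q(x) = 2√2(β + iα)e^{βy₂ + iαy₁}/(1 + e^{2(βy₂ + iαy₁)}). Then Q satisfies Q'' - (β + iα)²Q + Q³ = 0 and (Q')² - (β + iα)²Q² + (1/2)Q⁴ = 0 for all x ∈ ℝ. -/

import Mathlib

open Complex

/-- The complex-valued mKdV soliton satisfies `Q'' - (β+iα)²Q + Q³ = 0` and
`(Q')² - (β+iα)²Q² + (1/2)Q⁴ = 0`. -/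
theorem complex_soliton_equations (α β x₁ x₂ : ℝ) (hα : 0 < α) (hβ : 0 < β)
    (hnd : ∀ k : ℤ, x₁ ≠ x₂ + (Real.pi / α) * ((k : ℝ) + 1 / 2))
    (Q : ℝ → ℂ)
    (hQ : ∀ x : ℝ, Q x =
      2 * Real.sqrt 2 * ((β : ℂ) + (α : ℂ) * Complex.I) *
        Complex.exp ((β : ℂ) * ((x : ℂ) + (x₂ : ℂ)) +
          Complex.I * (α : ℂ) * ((x : ℂ) + (x₁ : ℂ))) /
        (1 + Complex.exp (2 * ((β : ℂ) * ((x : ℂ) + (x₂ : ℂ)) +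
          Complex.I * (α : ℂ) * ((x : ℂ) + (x₁ : ℂ)))))) :
    (∀ x : ℝ, deriv (deriv Q) x - ((β : ℂ) + (α : ℂ) * Complex.I) ^ 2 * Q x + Q x ^ 3 = 0) ∧
    (∀ x : ℝ, (deriv Q x) ^ 2 - ((β : ℂ) + (α : ℂ) * Complex.I) ^ 2 * (Q x) ^ 2 +
      (1 / 2) * (Q x) ^ 4 = 0) := by
  set l : ℂ := (β : ℂ) + (α : ℂ) * Complex.I with hl
  set c : ℂ := (β : ℂ) * x₂ + Complex.I * (α : ℂ) * x₁ with hc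
  set C : ℂ := 2 * (Real.sqrt 2 : ℝ) * l with hC
  set u : ℝ → ℂ := fun x => Complex.exp (l * x + c) with hu_def
  have hs2 : ((Real.sqrt 2 : ℝ) : ℂ) ^ 2 = 2 := by
    norm_cast
    rw [Real.sq_sqrt] <;> norm_num
  have hC2 : C ^ 2 = 8 * l ^ 2 := by
    rw [hC]; linear_combination (4 * l ^ 2) * hs2
  have harg : ∀ x : ℝ, (β : ℂ) * ((x : ℂ) + x₂) + Complex.I * (α : ℂ) * ((x : ℂ) + x₁)
      = l * x + c := by
    intro x; rw [hl, hc]; ring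
  have hQe : Q = fun x : ℝ => C * u x / (1 + (u x) ^ 2) := by
    funext x
    have e1 : Complex.exp (2 * (l * (x : ℂ) + c)) = (u x) ^ 2 := by
      rw [show (2 : ℂ) * (l * (x : ℂ) + c) = (l * (x : ℂ) + c) + (l * (x : ℂ) + c) by ring,
        Complex.exp_add]
      simp only [hu_def, pow_two]
    rw [hQ x, harg x, e1]
  have hu : ∀ x : ℝ, HasDerivAt u (l * u x) x := by
    intro x
    have h1 : HasDerivAt (fun w : ℂ => Complex.exp (l * w + c))
        (Complex.exp (l * (x : ℂ) + c) * (l * 1)) (x : ℂ) :=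
      (((hasDerivAt_id ((x : ℝ) : ℂ)).const_mul l).add_const c).cexp
    simpa [hu_def, mul_comm] using h1.comp_ofReal
  have hsq : ∀ x : ℝ, HasDerivAt (fun y => u y ^ 2) (2 * l * u x ^ 2) x := by
    intro x
    have h := (hu x).mul (hu x)
    have hfun : (fun y : ℝ => u y * u y) = fun y => u y ^ 2 := by funext y; ring
    rw [show u * u = (fun y : ℝ => u y * u y) from rfl, hfun] at h
    have e : l * u x * u x + u x * (l * u x) = 2 * l * u x ^ 2 := by ring
    rw [← e]
    exact h
  have hne : ∀ x : ℝ, 1 + (u x) ^ 2 ≠ 0 := by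
    intro x h
    have hexp1 : Complex.exp (2 * (l * x + c) + Real.pi * Complex.I) = 1 := by
      rw [Complex.exp_add, Complex.exp_pi_mul_I,
        show (2 : ℂ) * (l * x + c) = (l * x + c) + (l * x + c) by ring, Complex.exp_add]
      have h2 : (u x) ^ 2 = -1 := by linear_combination h
      simp only [hu_def] at h2
      rw [show Complex.exp (l * x + c) * Complex.exp (l * x + c)
        = Complex.exp (l * x + c) ^ 2 by ring, h2]
      ring
    obtain ⟨n, hn⟩ := Complex.exp_eq_one_iff.mp hexp1
    have hre := congrArg Complex.re hn
    have him := congrArg Complex.im hn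
    simp [hl, hc, Complex.add_re, Complex.add_im, Complex.mul_re, Complex.mul_im] at hre him
    have hx : x = -x₂ := by nlinarith [hre]
    have hπ := Real.pi_pos
    apply hnd (n - 1)
    push_cast
    field_simp
    nlinarith [him, hx]
  have hD1 : ∀ x : ℝ, HasDerivAt Q (C * l * u x * (1 - u x ^ 2) / (1 + u x ^ 2) ^ 2) x := by
    intro x
    have h := ((hu x).const_mul C).div ((hsq x).const_add 1) (hne x)
    rw [hQe]
    refine h.congr_deriv ?_
    ring
  have hd1 : deriv Q = fun x => C * l * u x * (1 - u x ^ 2) / (1 + u x ^ 2) ^ 2 :=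
    funext fun x => (hD1 x).deriv
  have hD2 : ∀ x : ℝ, HasDerivAt (deriv Q)
      (C * l ^ 2 * (u x - 6 * u x ^ 3 + u x ^ 5) / (1 + u x ^ 2) ^ 3) x := by
    intro x
    rw [hd1]
    have hnum := ((hu x).const_mul (C * l)).mul ((hsq x).const_sub 1)
    have hden := ((hsq x).const_add 1).mul ((hsq x).const_add 1)
    have hfun2 : (fun y : ℝ => (1 + u y ^ 2) * (1 + u y ^ 2)) = fun y => (1 + u y ^ 2) ^ 2 := by
      funext y; ring
    rw [show ((fun x => 1 + u x ^ 2) * fun x => 1 + u x ^ 2) = (fun y : ℝ => (1 + u y ^ 2) * (1 + u y ^ 2)) from rfl, hfun2] at hden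
    have hdne : (1 + u x ^ 2) ^ 2 ≠ 0 := pow_ne_zero 2 (hne x)
    have h := hnum.div hden hdne
    simp only [Pi.mul_apply] at h
    refine h.congr_deriv ?_
    field_simp [hne x]
    ring
  have hd2 : ∀ x : ℝ, deriv (deriv Q) x
      = C * l ^ 2 * (u x - 6 * u x ^ 3 + u x ^ 5) / (1 + u x ^ 2) ^ 3 :=
    fun x => (hD2 x).deriv
  constructor
  · intro x
    rw [hd2 x, hQe]
    simp only
    field_simp [hne x]
    linear_combination (C * u x ^ 3) * hC2
  · intro x
    rw [hd1, hQe]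
    simp only
    field_simp [hne x]
    linear_combination (C ^ 2 * u x ^ 4) * hC2
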